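/- Let k(t,s) := min{t,s} on [0,1]², let 0 < ρ < (1/4)·ln 2, set t_ρ := (2/(3π))·arccos(e^{4ρ} − 1) and F_low(t) := e^{−2ρ} ∫₀^{2/3} k(t,s) sin((3π/2)s) ds + e^{2ρ} ∫_{2/3}^{1} k(t,s) sin((3π/2)s) ds. If λ_ρ ∈ ℝ and a continuous u_ρ : [0,1] → ℝ with ‖u_ρ‖_∞ = ρ satisfy u_ρ(t) = λ_ρ ∫₀¹ k(t,s) · sin((3π/2)s) · e^{u_ρ(s)} / (∫₀¹ e^{u_ρ(x)} dx) ds for all t ∈ [0,1], then −ρ/F_low(t_ρ) ≤ λ_ρ ≤ ρ/F_low(t_ρ). -/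

import Mathlib

open MeasureTheory Set Real

private lemma hd_sin (c x : ℝ) : HasDerivAt (fun y => Real.sin (c*y)) (Real.cos (c*x)*c) x :=
  (Real.hasDerivAt_sin (c*x)).comp x (by simpa using (hasDerivAt_id x).const_mul c)

private lemma hd_cos (c x : ℝ) : HasDerivAt (fun y => Real.cos (c*y)) (-Real.sin (c*x)*c) x :=
  (Real.hasDerivAt_cos (c*x)).comp x (by simpa using (hasDerivAt_id x).const_mul c)

private lemma integral_sin_mul (c : ℝ) (hc : c ≠ 0) (a b : ℝ) :
    ∫ s in a..b, Real.sin (c * s) = (Real.cos (c*a) - Real.cos (c*b)) / c := by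
  have h : ∀ x ∈ Set.uIcc a b, HasDerivAt (fun y => -Real.cos (c*y)/c) (Real.sin (c*x)) x := by
    intro x _
    have := ((hd_cos c x).neg).div_const c
    refine this.congr_deriv ?_
    field_simp
  rw [intervalIntegral.integral_eq_sub_of_hasDerivAt h
    ((by continuity : Continuous fun s => Real.sin (c*s)).intervalIntegrable a b)]
  ring

private lemma integral_id_mul_sin (c : ℝ) (hc : c ≠ 0) (a b : ℝ) :
    ∫ s in a..b, s * Real.sin (c * s) =
      (Real.sin (c*b)/c^2 - b * Real.cos (c*b)/c) - (Real.sin (c*a)/c^2 - a * Real.cos (c*a)/c) := by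
  have h : ∀ x ∈ Set.uIcc a b,
      HasDerivAt (fun y => Real.sin (c*y)/c^2 - y * Real.cos (c*y)/c) (x * Real.sin (c*x)) x := by
    intro x _
    have h1 := ((hd_sin c x).div_const (c^2)).sub (((hasDerivAt_id x).mul (hd_cos c x)).div_const c)
    refine h1.congr_deriv ?_
    simp only [id]
    field_simp
    ring
  rw [intervalIntegral.integral_eq_sub_of_hasDerivAt h
    ((by continuity : Continuous fun s => s * Real.sin (c*s)).intervalIntegrable a b)]

private lemma cont_min_sin (t : ℝ) : Continuous fun s : ℝ => min t s * Real.sin (3*π/2*s) :=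
  (continuous_const.min continuous_id).mul (by continuity)

private lemma intA (t : ℝ) (ht0 : 0 ≤ t) (ht : t ≤ 2/3) :
    ∫ s in (0:ℝ)..(2/3), min t s * Real.sin (3*π/2*s)
      = Real.sin (3*π/2*t)/(3*π/2)^2 + t/(3*π/2) := by
  have hπ := Real.pi_pos
  have hc : (3*π/2) ≠ 0 := by positivity
  have hi : ∀ a b : ℝ, IntervalIntegrable (fun s => min t s * Real.sin (3*π/2*s)) volume a b :=
    fun a b => (cont_min_sin t).intervalIntegrable a b
  rw [← intervalIntegral.integral_add_adjacent_intervals (hi 0 t) (hi t (2/3))]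
  have e1 : (∫ s in (0:ℝ)..t, min t s * Real.sin (3*π/2*s))
      = ∫ s in (0:ℝ)..t, s * Real.sin (3*π/2*s) := by
    apply intervalIntegral.integral_congr
    intro s hs
    rw [Set.uIcc_of_le ht0] at hs
    simp [min_eq_right hs.2]
  have e2 : (∫ s in t..(2/3:ℝ), min t s * Real.sin (3*π/2*s))
      = ∫ s in t..(2/3:ℝ), t * Real.sin (3*π/2*s) := by
    apply intervalIntegral.integral_congr
    intro s hs
    rw [Set.uIcc_of_le ht] at hs
    simp [min_eq_left hs.1]
  rw [e1, e2, integral_id_mul_sin _ hc, intervalIntegral.integral_const_mul,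
    integral_sin_mul _ hc]
  rw [show (3*π/2*(2/3:ℝ)) = π by ring, show (3*π/2*(0:ℝ)) = 0 by ring,
    Real.cos_pi, Real.sin_zero, Real.cos_zero]
  field_simp
  ring

private lemma intB (t : ℝ) (ht : t ≤ 2/3) :
    ∫ s in (2/3:ℝ)..1, min t s * Real.sin (3*π/2*s) = -t/(3*π/2) := by
  have hπ := Real.pi_pos
  have hc : (3*π/2) ≠ 0 := by positivity
  have e2 : (∫ s in (2/3:ℝ)..1, min t s * Real.sin (3*π/2*s))
      = ∫ s in (2/3:ℝ)..1, t * Real.sin (3*π/2*s) := by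
    apply intervalIntegral.integral_congr
    intro s hs
    rw [Set.uIcc_of_le (by norm_num : (2/3:ℝ) ≤ 1)] at hs
    simp [min_eq_left (ht.trans hs.1)]
  rw [e2, intervalIntegral.integral_const_mul, integral_sin_mul _ hc]
  rw [show (3*π/2*(2/3:ℝ)) = π by ring, show (3*π/2*(1:ℝ)) = π + π/2 by ring,
    Real.cos_pi, Real.cos_add]
  simp
  field_simp

private lemma key (ρ : ℝ) {t : ℝ} (ht0 : 0 ≤ t) (ht23 : t ≤ 2/3)
    (v : ℝ → ℝ) (hv : Continuous v) (hvb : ∀ s, |v s| ≤ ρ) :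
    Real.exp (-(2*ρ)) * (∫ s in (0:ℝ)..(2/3), min t s * Real.sin (3 * π / 2 * s)) +
    Real.exp (2*ρ) * (∫ s in (2/3:ℝ)..1, min t s * Real.sin (3 * π / 2 * s)) ≤
    ∫ s in (0:ℝ)..1, min t s *
      (Real.sin (3 * π / 2 * s) * Real.exp (v s) / ∫ x in (0:ℝ)..1, Real.exp (v x)) := by
  have hπ := Real.pi_pos
  set D := ∫ x in (0:ℝ)..1, Real.exp (v x) with hD
  have hve : Continuous fun s => Real.exp (v s) := Real.continuous_exp.comp hv
  have hDlb : Real.exp (-ρ) ≤ D := by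
    have h1 : (∫ _x in (0:ℝ)..1, Real.exp (-ρ)) ≤ D :=
      intervalIntegral.integral_mono_on (by norm_num) intervalIntegrable_const
        (hve.intervalIntegrable 0 1)
        (fun x _ => Real.exp_le_exp.mpr ((abs_le.mp (hvb x)).1))
    simpa using h1
  have hDub : D ≤ Real.exp ρ := by
    have h1 : D ≤ ∫ _x in (0:ℝ)..1, Real.exp ρ :=
      intervalIntegral.integral_mono_on (by norm_num) (hve.intervalIntegrable 0 1)
        intervalIntegrable_const
        (fun x _ => Real.exp_le_exp.mpr ((abs_le.mp (hvb x)).2))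
    simpa using h1
  have hDpos : 0 < D := lt_of_lt_of_le (Real.exp_pos _) hDlb
  have hwlb : ∀ s : ℝ, Real.exp (-(2*ρ)) ≤ Real.exp (v s) / D := by
    intro s
    have h2 := div_le_div₀ (Real.exp_nonneg (v s))
      (Real.exp_le_exp.mpr ((abs_le.mp (hvb s)).1)) hDpos hDub
    have h3 : Real.exp (-(2*ρ)) = Real.exp (-ρ) / Real.exp ρ := by
      rw [← Real.exp_sub]; ring_nf
    linarith
  have hwub : ∀ s : ℝ, Real.exp (v s) / D ≤ Real.exp (2*ρ) := by
    intro s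
    have h2 := div_le_div₀ (Real.exp_nonneg ρ)
      (Real.exp_le_exp.mpr ((abs_le.mp (hvb s)).2)) (Real.exp_pos (-ρ)) hDlb
    have h3 : Real.exp (2*ρ) = Real.exp ρ / Real.exp (-ρ) := by
      rw [← Real.exp_sub]; ring_nf
    linarith
  have hKw : Continuous fun s => (min t s * Real.sin (3*π/2*s)) * (Real.exp (v s) / D) :=
    (cont_min_sin t).mul (hve.div_const D)
  rw [show (∫ s in (0:ℝ)..1, min t s *
        (Real.sin (3 * π / 2 * s) * Real.exp (v s) / D))
      = ∫ s in (0:ℝ)..1, (min t s * Real.sin (3*π/2*s)) * (Real.exp (v s) / D) from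
    intervalIntegral.integral_congr (fun s _ => by ring)]
  rw [← intervalIntegral.integral_add_adjacent_intervals
    (hKw.intervalIntegrable 0 (2/3)) (hKw.intervalIntegrable (2/3) 1)]
  apply add_le_add
  · rw [← intervalIntegral.integral_const_mul]
    apply intervalIntegral.integral_mono_on (by norm_num)
      ((continuous_const.mul (cont_min_sin t)).intervalIntegrable _ _)
      (hKw.intervalIntegrable _ _)
    intro s hs
    have hsin0 : 0 ≤ Real.sin (3*π/2*s) :=
      Real.sin_nonneg_of_nonneg_of_le_pi (by nlinarith [hs.1]) (by nlinarith [hs.2])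
    have hK0 : 0 ≤ min t s * Real.sin (3*π/2*s) := mul_nonneg (le_min ht0 hs.1) hsin0
    calc Real.exp (-(2*ρ)) * (min t s * Real.sin (3*π/2*s))
        = (min t s * Real.sin (3*π/2*s)) * Real.exp (-(2*ρ)) := by ring
      _ ≤ (min t s * Real.sin (3*π/2*s)) * (Real.exp (v s) / D) :=
          mul_le_mul_of_nonneg_left (hwlb s) hK0
  · rw [← intervalIntegral.integral_const_mul]
    apply intervalIntegral.integral_mono_on (by norm_num)
      ((continuous_const.mul (cont_min_sin t)).intervalIntegrable _ _)
      (hKw.intervalIntegrable _ _)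
    intro s hs
    have hsin0 : Real.sin (3*π/2*s) ≤ 0 := by
      have h1 : Real.sin (3*π/2*s - π) = -Real.sin (3*π/2*s) := Real.sin_sub_pi _
      have h2 : 0 ≤ Real.sin (3*π/2*s - π) :=
        Real.sin_nonneg_of_nonneg_of_le_pi (by nlinarith [hs.1]) (by nlinarith [hs.2])
      linarith
    have hK0 : min t s * Real.sin (3*π/2*s) ≤ 0 :=
      mul_nonpos_of_nonneg_of_nonpos (le_min ht0 (le_trans (by norm_num) hs.1)) hsin0
    calc Real.exp (2*ρ) * (min t s * Real.sin (3*π/2*s))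
        = (min t s * Real.sin (3*π/2*s)) * Real.exp (2*ρ) := by ring
      _ ≤ (min t s * Real.sin (3*π/2*s)) * (Real.exp (v s) / D) :=
          mul_le_mul_of_nonpos_left (hwub s) hK0

/-- Localization of the eigenvalues for the mixed BVP: if 0 < rho < (1/4) ln 2
and (lam, u) solves the integral equation with sup-norm of u equal to rho, then
-rho / F_low(t_rho) <= lam <= rho / F_low(t_rho). -/
theorem mixed_bvp_eigenvalue_localization
    (ρ : ℝ) (hρ : 0 < ρ) (hρ' : ρ < 1/4 * Real.log 2)
    (Flow : ℝ → ℝ)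
    (hFlow : ∀ t : ℝ, Flow t =
      Real.exp (-(2*ρ)) * (∫ s in (0:ℝ)..(2/3), min t s * Real.sin (3 * π / 2 * s)) +
      Real.exp (2*ρ) * ∫ s in (2/3:ℝ)..1, min t s * Real.sin (3 * π / 2 * s))
    (lam : ℝ) (u : C(Set.Icc (0:ℝ) 1, ℝ)) (hu : ‖u‖ = ρ)
    (heq : ∀ t : Set.Icc (0:ℝ) 1, u t = lam *
      ∫ s in (0:ℝ)..1, min (t:ℝ) s *
            (Real.sin (3 * π / 2 * s) * Real.exp (u (Set.projIcc 0 1 zero_le_one s)) /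
              ∫ x in (0:ℝ)..1, Real.exp (u (Set.projIcc 0 1 zero_le_one x)))) :
    -ρ / Flow (2 / (3 * π) * Real.arccos (Real.exp (4*ρ) - 1)) ≤ lam ∧
    lam ≤ ρ / Flow (2 / (3 * π) * Real.arccos (Real.exp (4*ρ) - 1)) := by
  have hπ := Real.pi_pos
  set θ := Real.arccos (Real.exp (4*ρ) - 1) with hθdef
  set t := 2 / (3 * π) * θ with htdef
  have hx0 : 0 < Real.exp (4*ρ) - 1 := by
    have h1 : (1:ℝ) < Real.exp (4*ρ) := by
      rw [← Real.exp_zero]; exact Real.exp_lt_exp.mpr (by linarith)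
    linarith
  have hx1 : Real.exp (4*ρ) - 1 < 1 := by
    have h4 : Real.exp (4*ρ) < Real.exp (Real.log 2) := Real.exp_lt_exp.mpr (by linarith)
    rw [Real.exp_log (by norm_num : (0:ℝ) < 2)] at h4
    linarith
  have hθ0 : 0 < θ := Real.arccos_pos.mpr hx1
  have hθhalf : θ < π/2 := Real.arccos_lt_pi_div_two.mpr hx0
  have hcos : Real.cos θ = Real.exp (4*ρ) - 1 := Real.cos_arccos (by linarith) (by linarith)
  have hsin : θ * Real.cos θ < Real.sin θ := by
    have h1 := Real.lt_tan hθ0 hθhalf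
    rw [Real.tan_eq_sin_div_cos] at h1
    have hcp : 0 < Real.cos θ := by rw [hcos]; exact hx0
    have h2 := mul_lt_mul_of_pos_right h1 hcp
    rw [div_mul_cancel₀ _ (ne_of_gt hcp)] at h2
    exact h2
  have ht0 : 0 < t := by
    rw [htdef]; positivity
  have hct : 3*π/2*t = θ := by
    rw [htdef]; field_simp
  have ht23 : t ≤ 2/3 := by
    nlinarith [hct, hθhalf, ht0]
  have ht1 : t ≤ 1 := by linarith
  have hFt : Flow t = Real.exp (-(2*ρ)) / (3*π/2)^2 * (Real.sin θ - θ * Real.cos θ) := by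
    rw [hFlow t, intA t ht0.le ht23, intB t ht23, hct, hcos]
    have htθ : t = θ / (3*π/2) := by
      rw [eq_div_iff (by positivity : (3*π/2 : ℝ) ≠ 0)]
      linarith [hct]
    have he : Real.exp (2*ρ) = Real.exp (-(2*ρ)) * Real.exp (4*ρ) := by
      rw [← Real.exp_add]; ring_nf
    rw [htθ, he]
    field_simp
    ring
  have hFpos : 0 < Flow t := by
    rw [hFt]
    apply mul_pos (by positivity)
    linarith
  have hvb : ∀ s : ℝ, |u (Set.projIcc 0 1 zero_le_one s)| ≤ ρ := by
    intro s
    rw [← hu, ← Real.norm_eq_abs]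
    exact u.norm_coe_le_norm _
  have hvcont : Continuous fun s : ℝ => u (Set.projIcc 0 1 zero_le_one s) :=
    u.continuous.comp continuous_projIcc
  have hkey := key ρ ht0.le ht23 (fun s => u (Set.projIcc 0 1 zero_le_one s)) hvcont hvb
  beta_reduce at hkey
  rw [← hFlow t] at hkey
  set I := ∫ s in (0:ℝ)..1, min t s *
      (Real.sin (3 * π / 2 * s) * Real.exp (u (Set.projIcc 0 1 zero_le_one s)) /
        ∫ x in (0:ℝ)..1, Real.exp (u (Set.projIcc 0 1 zero_le_one x))) with hI
  have hut : u ⟨t, ⟨ht0.le, ht1⟩⟩ = lam * I := heq ⟨t, ⟨ht0.le, ht1⟩⟩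
  have hIpos : 0 < I := lt_of_lt_of_le hFpos hkey
  have habs : |lam| * I ≤ ρ := by
    have h1 : |u ⟨t, ⟨ht0.le, ht1⟩⟩| ≤ ρ := by
      rw [← hu, ← Real.norm_eq_abs]; exact u.norm_coe_le_norm _
    rw [hut, abs_mul, abs_of_pos hIpos] at h1
    exact h1
  have hlam : |lam| ≤ ρ / Flow t := by
    rw [le_div_iff₀ hFpos]
    calc |lam| * Flow t ≤ |lam| * I := mul_le_mul_of_nonneg_left hkey (abs_nonneg _)
      _ ≤ ρ := habs
  obtain ⟨h1, h2⟩ := abs_le.mp hlam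
  exact ⟨by rw [neg_div]; exact h1, h2⟩
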